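/- With the same regular-polygon setup (θ_k ≡ θ₀, N_k = (ν_k+ν_{k-1})/(1+cos θ₀), T_k = −RN_k), for v_k = ψ_k N_k + η_k T_k one has ⟨v_k, R v_{k+1}⟩ = −2 tan(θ₀/2)(ψ_k ψ_{k+1} + η_k η_{k+1}) − (1 − tan²(θ₀/2))(η_k ψ_{k+1} − η_{k+1} ψ_k). -/

import Mathlib

open Real Finset
open scoped RealInnerProductSpace

abbrev E2 := EuclideanSpace ℝ (Fin 2)

/-- Rotation by π/2 in the plane. -/
noncomputable def Rot (v : E2) : E2 :=
  (WithLp.equiv 2 (Fin 2 → ℝ)).symm ![-v 1, v 0]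

/-- Rotation by angle θ in the plane. -/
noncomputable def RotBy (θ : ℝ) (v : E2) : E2 :=
  (WithLp.equiv 2 (Fin 2 → ℝ)).symm
    ![Real.cos θ * v 0 - Real.sin θ * v 1, Real.sin θ * v 0 + Real.cos θ * v 1]

set_option maxHeartbeats 2000000 in
theorem secondVariation_volume_part (n : ℕ) [NeZero n]
    (p : ZMod n → E2) (hreg : ∀ k, p (k + 1) ≠ p k)
    (ν : ZMod n → E2)
    (hν : ∀ k, ν k = Rot (‖p (k + 1) - p k‖⁻¹ • (p (k + 1) - p k)))
    (θ₀ : ℝ) (hθ₀range : θ₀ ∈ Set.Ioo (-π) π) (hθ₀ : θ₀ ≠ 0)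
    (hθ : ∀ k, RotBy θ₀ (ν (k - 1)) = ν k)
    (N T : ZMod n → E2)
    (hN : ∀ k, N k = (1 + Real.cos θ₀)⁻¹ • (ν k + ν (k - 1)))
    (hT : ∀ k, T k = -Rot (N k))
    (ψ η : ZMod n → ℝ) (v : ZMod n → E2)
    (hv : ∀ k, v k = ψ k • N k + η k • T k) :
    ∀ k : ZMod n,
      ⟪v k, Rot (v (k + 1))⟫ =
        -2 * Real.tan (θ₀ / 2) * (ψ k * ψ (k + 1) + η k * η (k + 1)) -
          (1 - Real.tan (θ₀ / 2) ^ 2) * (η k * ψ (k + 1) - η (k + 1) * ψ k) := by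
  intro k
  set c := Real.cos θ₀ with hc
  set s := Real.sin θ₀ with hs
  have hpyth : s ^ 2 + c ^ 2 = 1 := Real.sin_sq_add_cos_sq θ₀
  have hhalf : 0 < Real.cos (θ₀ / 2) := by
    apply Real.cos_pos_of_mem_Ioo
    constructor
    · linarith [hθ₀range.1]
    · linarith [hθ₀range.2]
  have h1c : 1 + c = 2 * Real.cos (θ₀ / 2) ^ 2 := by
    have := Real.cos_sq (θ₀ / 2)
    rw [show 2 * (θ₀ / 2) = θ₀ by ring] at this
    rw [hc]; linarith
  have h1cne : (1 : ℝ) + c ≠ 0 := by rw [h1c]; positivity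
  have hsin2 : s = 2 * Real.sin (θ₀ / 2) * Real.cos (θ₀ / 2) := by
    rw [hs, show θ₀ = 2 * (θ₀ / 2) by ring, Real.sin_two_mul]; ring
  have htan : Real.tan (θ₀ / 2) = s / (1 + c) := by
    rw [Real.tan_eq_sin_div_cos, h1c, hsin2]
    field_simp
  -- unit norm of ν (k-1)
  have hunit : ν (k - 1) 0 ^ 2 + ν (k - 1) 1 ^ 2 = 1 := by
    have hcc : (k - 1 : ZMod n) + 1 = k := sub_add_cancel k 1
    have hνm := hν (k - 1)
    rw [hcc] at hνm
    have hd : p k - p (k - 1) ≠ 0 := by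
      have := hreg (k - 1); rw [hcc] at this; exact sub_ne_zero.mpr this
    have hw : ‖‖p k - p (k - 1)‖⁻¹ • (p k - p (k - 1))‖ = 1 := by
      rw [norm_smul, norm_inv, norm_norm, inv_mul_cancel₀ (norm_ne_zero_iff.mpr hd)]
    set w := ‖p k - p (k - 1)‖⁻¹ • (p k - p (k - 1)) with hwdef
    have h0 : ν (k - 1) 0 = -w 1 := by rw [hνm]; simp [Rot]
    have h1 : ν (k - 1) 1 = w 0 := by rw [hνm]; simp [Rot]
    rw [h0, h1]
    have := EuclideanSpace.norm_eq w
    rw [hw] at this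
    have h2 : Real.sqrt (∑ i, w i ^ 2) = 1 := by
      simpa [Real.norm_eq_abs, sq_abs] using this.symm
    rw [Fin.sum_univ_two] at h2
    nlinarith [Real.sq_sqrt (by positivity : (0 : ℝ) ≤ w 0 ^ 2 + w 1 ^ 2)]
  -- components of ν k
  have hk0 : ν k 0 = c * ν (k - 1) 0 - s * ν (k - 1) 1 := by rw [← hθ k]; simp [RotBy, hc, hs]
  have hk1 : ν k 1 = s * ν (k - 1) 0 + c * ν (k - 1) 1 := by rw [← hθ k]; simp [RotBy, hc, hs]
  -- components of ν (k+1)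
  have hcancel : (k + 1 : ZMod n) - 1 = k := add_sub_cancel_right k 1
  have hk10 : ν (k + 1) 0 = c * ν k 0 - s * ν k 1 := by
    rw [← hθ (k + 1), hcancel]; simp [RotBy, hc, hs]
  have hk11 : ν (k + 1) 1 = s * ν k 0 + c * ν k 1 := by
    rw [← hθ (k + 1), hcancel]; simp [RotBy, hc, hs]
  rw [hv k, hv (k + 1), hT k, hT (k + 1), hN k, hN (k + 1), hcancel]
  simp only [PiLp.inner_apply, Fin.sum_univ_two, RCLike.inner_apply, conj_trivial,
    PiLp.add_apply, PiLp.smul_apply, PiLp.neg_apply, smul_eq_mul, Rot,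
    WithLp.equiv_symm_apply, PiLp.toLp_apply, Matrix.cons_val_zero, Matrix.cons_val_one, Matrix.head_cons]
  rw [hk10, hk11, hk0, hk1, htan]
  have hinv : (1 + c) * (1 + c)⁻¹ = 1 := mul_inv_cancel₀ h1cne
  linear_combination ((-2) * (ψ (k + 1)) * (η k) + (2) * (ψ (k + 1)) * (η k) * ((1 + c)⁻¹) + (2) * (ψ k) * (η (k + 1)) + (-2) * (ψ k) * (η (k + 1)) * ((1 + c)⁻¹) + (-2) * s * (η k) * (η (k + 1)) * ((1 + c)⁻¹) + (-2) * s * (ψ k) * (ψ (k + 1)) * ((1 + c)⁻¹)) * hunit + ((-1) * (ψ (k + 1)) * (η k) * ((1 + c)⁻¹)^2 + (1) * (ψ k) * (η (k + 1)) * ((1 + c)⁻¹)^2 + (-1) * (ν (k - 1) 1)^2 * (ψ (k + 1)) * (η k) * ((1 + c)⁻¹) + (1) * (ν (k - 1) 1)^2 * (ψ (k + 1)) * (η k) * ((1 + c)⁻¹)^2 + (1) * (ν (k - 1) 1)^2 * (ψ k) * (η (k + 1)) * ((1 + c)⁻¹) + (-1) * (ν (k - 1) 1)^2 * (ψ k)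 * (η (k + 1)) * ((1 + c)⁻¹)^2 + (-1) * (ν (k - 1) 1)^2 * s * (η k) * (η (k + 1)) * ((1 + c)⁻¹)^2 + (-1) * (ν (k - 1) 1)^2 * s * (ψ k) * (ψ (k + 1)) * ((1 + c)⁻¹)^2 + (-1) * (ν (k - 1) 0)^2 * (ψ (k + 1)) * (η k) * ((1 + c)⁻¹) + (1) * (ν (k - 1) 0)^2 * (ψ (k + 1)) * (η k) * ((1 + c)⁻¹)^2 + (1) * (ν (k - 1) 0)^2 * (ψ k) * (η (k + 1)) * ((1 + c)⁻¹) + (-1) * (ν (k - 1) 0)^2 * (ψ k) * (η (k + 1)) * ((1 + c)⁻¹)^2 + (-1) * (ν (k - 1) 0)^2 * s * (η k) * (η (k + 1)) * ((1 + c)⁻¹)^2 + (-1) * (ν (k - 1) 0)^2 * s * (ψ k) * (ψ (k + 1)) * ((1 + c)⁻¹)^2) * hpyth + ((1) * (ψ (k + 1)) * (η k) + (-1) * (ψ (k + 1)) * (η k) * ((1 + c)⁻¹) + (-1) * (ψ k) * (η (k + 1)) + (1) * (ψ k) * (η (k + 1)) * ((1 + c)⁻¹) + (1) * c * (ψ (k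 + 1)) * (η k) * ((1 + c)⁻¹) + (-1) * c * (ψ k) * (η (k + 1)) * ((1 + c)⁻¹) + (-2) * (ν (k - 1) 1)^2 * (ψ (k + 1)) * (η k) + (1) * (ν (k - 1) 1)^2 * (ψ (k + 1)) * (η k) * ((1 + c)⁻¹) + (2) * (ν (k - 1) 1)^2 * (ψ k) * (η (k + 1)) + (-1) * (ν (k - 1) 1)^2 * (ψ k) * (η (k + 1)) * ((1 + c)⁻¹) + (-2) * (ν (k - 1) 1)^2 * s * (η k) * (η (k + 1)) * ((1 + c)⁻¹) + (-2) * (ν (k - 1) 1)^2 * s * (ψ k) * (ψ (k + 1)) * ((1 + c)⁻¹) + (-1) * (ν (k - 1) 1)^2 * s^2 * (ψ (k + 1)) * (η k) * ((1 + c)⁻¹) + (1) * (ν (k - 1) 1)^2 * s^2 * (ψ k) * (η (k + 1)) * ((1 + c)⁻¹) + (-2) * (ν (k - 1) 1)^2 * c * (ψ (k + 1)) * (η k) * ((1 + c)⁻¹) + (2) * (ν (k - 1) 1)^2 * c * (ψ k) * (η (k + 1)) * ((1 + c)⁻¹) + (-1) * (ν (k - 1) 1)^2 * c^2 * (ψ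 (k + 1)) * (η k) * ((1 + c)⁻¹) + (1) * (ν (k - 1) 1)^2 * c^2 * (ψ k) * (η (k + 1)) * ((1 + c)⁻¹) + (-2) * (ν (k - 1) 0)^2 * (ψ (k + 1)) * (η k) + (1) * (ν (k - 1) 0)^2 * (ψ (k + 1)) * (η k) * ((1 + c)⁻¹) + (2) * (ν (k - 1) 0)^2 * (ψ k) * (η (k + 1)) + (-1) * (ν (k - 1) 0)^2 * (ψ k) * (η (k + 1)) * ((1 + c)⁻¹) + (-2) * (ν (k - 1) 0)^2 * s * (η k) * (η (k + 1)) * ((1 + c)⁻¹) + (-2) * (ν (k - 1) 0)^2 * s * (ψ k) * (ψ (k + 1)) * ((1 + c)⁻¹) + (-1) * (ν (k - 1) 0)^2 * s^2 * (ψ (k + 1)) * (η k) * ((1 + c)⁻¹) + (1) * (ν (k - 1) 0)^2 * s^2 * (ψ k) * (η (k + 1)) * ((1 + c)⁻¹) + (-2) * (ν (k - 1) 0)^2 * c * (ψ (k + 1)) * (η k) * ((1 + c)⁻¹) + (2) * (ν (k - 1) 0)^2 * c * (ψ k) * (η (k + 1)) * ((1 + c)⁻¹) + (-1) * (ν (k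 - 1) 0)^2 * c^2 * (ψ (k + 1)) * (η k) * ((1 + c)⁻¹) + (1) * (ν (k - 1) 0)^2 * c^2 * (ψ k) * (η (k + 1)) * ((1 + c)⁻¹)) * hinv
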